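/- There exists a family (f_t)_{t ∈ ℝ} of non-regular order-preserving maps ℚ → ℚ such that for distinct s, t ∈ ℝ, the images of f_s and f_t are not order-isomorphic; hence f_s and f_t are not 𝒟-related, and End(ℚ,≤) contains 2^ℵ0 non-regular 𝒟-classes. -/

import Mathlib

/-- f is ℒ-related to g in End(ℚ,≤). -/
def LRel (f g : ℚ → ℚ) : Prop :=
  ∃ u v : ℚ → ℚ, Monotone u ∧ Monotone v ∧ g = f ∘ u ∧ f = g ∘ v

/-- f is ℛ-related to g in End(ℚ,≤). -/
def RRel (f g : ℚ → ℚ) : Prop :=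
  ∃ u v : ℚ → ℚ, Monotone u ∧ Monotone v ∧ g = u ∘ f ∧ f = v ∘ g

/-- f is 𝒟-related to g in End(ℚ,≤). -/
def DRel (f g : ℚ → ℚ) : Prop :=
  ∃ h : ℚ → ℚ, Monotone h ∧ LRel f h ∧ RRel h g

noncomputable section Aux

open Real Set

def Gfun (b : Bool) (u : ℚ) : ℚ :=
  if u < 1/4 then 0
  else if u < 1/2 then 1/4
  else if u < 3/4 then (if b then 1/2 else 1/4)
  else 3/8 + u/2

noncomputable def Ffun (d : ℕ → Bool) (x : ℚ) : ℚ :=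
  if (x:ℝ) < -Real.sqrt 2 then x
  else if x < 0 then x + 1
  else 1 + (⌊x⌋ : ℚ) + Gfun (d ⌊x⌋.toNat) (Int.fract x)

def blk (d : ℕ → Bool) (n : ℕ) : Set ℚ :=
  {1 + (n:ℚ), 1 + (n:ℚ) + 1/4} ∪ (if d n then {1 + (n:ℚ) + 1/2} else ∅) ∪
    Set.Ico (1 + (n:ℚ) + 3/4) (1 + (n:ℚ) + 7/8)

def Sset (d : ℕ → Bool) : Set ℚ :=
  {q | (q:ℝ) < -Real.sqrt 2} ∪ {q | 1 - Real.sqrt 2 < (q:ℝ) ∧ q < 1} ∪ ⋃ n, blk d n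

noncomputable def digits (t : ℝ) (n : ℕ) : Bool :=
  if ((Denumerable.eqv ℚ).symm n : ℚ) < t then true else false

lemma Gfun_mono (b : Bool) : Monotone (Gfun b) := by
  intro u v huv
  cases b <;> (unfold Gfun; split_ifs <;> simp_all <;> linarith)

lemma Gfun_nonneg (b : Bool) (u : ℚ) : 0 ≤ Gfun b u := by
  cases b <;> (unfold Gfun; split_ifs <;> simp_all <;> linarith)

lemma Gfun_lt (b : Bool) {u : ℚ} (hu : u < 1) : Gfun b u < 7/8 := by
  cases b <;> (unfold Gfun; split_ifs <;> simp_all <;> linarith)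

lemma sqrt2_pos : (0:ℝ) < Real.sqrt 2 := Real.sqrt_pos.2 (by norm_num)

lemma Ffun_lo {d : ℕ → Bool} {x : ℚ} (h : (x:ℝ) < -Real.sqrt 2) : Ffun d x = x :=
  if_pos h

lemma Ffun_mid {d : ℕ → Bool} {x : ℚ} (h1 : ¬ (x:ℝ) < -Real.sqrt 2) (h2 : x < 0) :
    Ffun d x = x + 1 := by
  unfold Ffun; rw [if_neg h1, if_pos h2]

lemma Ffun_hi {d : ℕ → Bool} {x : ℚ} (h : 0 ≤ x) :
    Ffun d x = 1 + (⌊x⌋ : ℚ) + Gfun (d ⌊x⌋.toNat) (Int.fract x) := by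
  have h1 : ¬ (x:ℝ) < -Real.sqrt 2 := by
    push_neg; have : (0:ℝ) ≤ (x:ℝ) := by exact_mod_cast h
    linarith [sqrt2_pos]
  unfold Ffun; rw [if_neg h1, if_neg (not_lt.2 h)]

lemma floor_cast_nonneg {x : ℚ} (h : 0 ≤ x) : (0:ℚ) ≤ (⌊x⌋:ℚ) := by
  exact_mod_cast Int.floor_nonneg.2 h

lemma Ffun_hi_lb {d : ℕ → Bool} {x : ℚ} (h : 0 ≤ x) : 1 + (⌊x⌋:ℚ) ≤ Ffun d x := by
  rw [Ffun_hi h]; linarith [Gfun_nonneg (d ⌊x⌋.toNat) (Int.fract x)]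

lemma Ffun_hi_ub {d : ℕ → Bool} {x : ℚ} (h : 0 ≤ x) : Ffun d x < 1 + (⌊x⌋:ℚ) + 7/8 := by
  rw [Ffun_hi h]; linarith [Gfun_lt (d ⌊x⌋.toNat) (Int.fract_lt_one x)]

lemma Ffun_one_le {d : ℕ → Bool} {x : ℚ} (h : 0 ≤ x) : 1 ≤ Ffun d x := by
  have := Ffun_hi_lb (d := d) h; linarith [floor_cast_nonneg h]

lemma Ffun_mono (d : ℕ → Bool) : Monotone (Ffun d) := by
  intro x y hxy
  have hxy' : (x:ℝ) ≤ (y:ℝ) := by exact_mod_cast hxy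
  by_cases hx1 : (x:ℝ) < -Real.sqrt 2
  · rw [Ffun_lo hx1]
    have hx0 : x < 0 := by
      have : (x:ℝ) < 0 := lt_trans hx1 (by linarith [sqrt2_pos]); exact_mod_cast this
    by_cases hy1 : (y:ℝ) < -Real.sqrt 2
    · rw [Ffun_lo hy1]; exact hxy
    · by_cases hy2 : y < 0
      · rw [Ffun_mid hy1 hy2]; linarith
      · linarith [Ffun_one_le (d := d) (le_of_not_gt hy2)]
  · by_cases hx2 : x < 0
    · rw [Ffun_mid hx1 hx2]
      by_cases hy1 : (y:ℝ) < -Real.sqrt 2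
      · exact absurd (lt_of_le_of_lt hxy' hy1) hx1
      · by_cases hy2 : y < 0
        · rw [Ffun_mid hy1 hy2]; linarith
        · linarith [Ffun_one_le (d := d) (le_of_not_gt hy2)]
    · have hx0 : 0 ≤ x := le_of_not_gt hx2
      have hy0 : 0 ≤ y := le_trans hx0 hxy
      rw [Ffun_hi hx0, Ffun_hi hy0]
      rcases lt_or_eq_of_le (Int.floor_le_floor hxy) with hfl | hfl
      · have h1q : ((⌊x⌋:ℚ) + 1) ≤ (⌊y⌋:ℚ) := by exact_mod_cast Int.add_one_le_of_lt hfl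
        have := Gfun_lt (d ⌊x⌋.toNat) (Int.fract_lt_one x)
        have := Gfun_nonneg (d ⌊y⌋.toNat) (Int.fract y)
        linarith
      · rw [hfl]
        have hfr : Int.fract x ≤ Int.fract y := by
          unfold Int.fract; rw [hfl]; linarith
        exact add_le_add (le_refl _) (Gfun_mono _ hfr)

lemma neg_sqrt2_irr (q : ℚ) : (q:ℝ) ≠ -Real.sqrt 2 := by
  intro h
  exact (irrational_sqrt_two.neg) ⟨q, h⟩

lemma mem_blk_iff {d : ℕ → Bool} {n : ℕ} {q : ℚ} :
    q ∈ blk d n ↔ (q = 1 + (n:ℚ) ∨ q = 1 + (n:ℚ) + 1/4) ∨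
      (d n = true ∧ q = 1 + (n:ℚ) + 1/2) ∨
      (1 + (n:ℚ) + 3/4 ≤ q ∧ q < 1 + (n:ℚ) + 7/8) := by
  simp only [blk, Set.mem_union, Set.mem_insert_iff, Set.mem_singleton_iff, Set.mem_Ico,
    Set.mem_ite_empty_right]
  tauto

lemma mem_Sset_iff {d : ℕ → Bool} {q : ℚ} :
    q ∈ Sset d ↔ (q:ℝ) < -Real.sqrt 2 ∨ (1 - Real.sqrt 2 < (q:ℝ) ∧ q < 1) ∨
      ∃ n, q ∈ blk d n := by
  simp only [Sset, Set.mem_union, Set.mem_setOf_eq, Set.mem_iUnion]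
  tauto

lemma Gfun_blk (d : ℕ → Bool) (n : ℕ) {u : ℚ} (h0 : 0 ≤ u) (h1 : u < 1) :
    1 + (n:ℚ) + Gfun (d n) u ∈ blk d n := by
  rw [mem_blk_iff]
  cases hh : d n with
  | true =>
    simp only [Gfun, hh, if_true]
    split_ifs with h2 h3 h4
    · left; left; ring_nf
    · left; right; ring
    · right; left; exact ⟨by simp [hh], by ring⟩
    · right; right; constructor <;> linarith
  | false =>
    simp only [Gfun, hh, Bool.false_eq_true, if_false]
    split_ifs with h2 h3 h4
    · left; left; ring_nf
    · left; right; ring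
    · left; right; ring
    · right; right; constructor <;> linarith

lemma floor_fract_helper (n : ℕ) {u : ℚ} (h0 : 0 ≤ u) (h1 : u < 1) :
    ⌊(n:ℚ) + u⌋ = (n:ℤ) ∧ Int.fract ((n:ℚ) + u) = u := by
  have hz : ((n:ℤ):ℚ) = (n:ℚ) := by push_cast; ring
  have hf : ⌊u⌋ = 0 := Int.floor_eq_zero_iff.2 ⟨h0, h1⟩
  constructor
  · rw [← hz, Int.floor_intCast_add, hf, add_zero]
  · rw [← hz, Int.fract_intCast_add, Int.fract, hf]; push_cast; ring

lemma Ffun_key (d : ℕ → Bool) (n : ℕ) {u : ℚ} (h0 : 0 ≤ u) (h1 : u < 1) :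
    Ffun d ((n:ℚ) + u) = 1 + (n:ℚ) + Gfun (d n) u := by
  have hx0 : (0:ℚ) ≤ (n:ℚ) + u := by positivity
  obtain ⟨hfl, hfr⟩ := floor_fract_helper n h0 h1
  rw [Ffun_hi hx0, hfl, hfr]
  norm_num

lemma blk_in_Sset {d : ℕ → Bool} {n : ℕ} {q : ℚ} (h : q ∈ blk d n) : q ∈ Sset d :=
  mem_Sset_iff.2 (Or.inr (Or.inr ⟨n, h⟩))

lemma range_Ffun (d : ℕ → Bool) : Set.range (Ffun d) = Sset d := by
  apply Set.Subset.antisymm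
  · rintro q ⟨x, rfl⟩
    rw [mem_Sset_iff]
    by_cases hx1 : (x:ℝ) < -Real.sqrt 2
    · rw [Ffun_lo hx1]; exact Or.inl hx1
    · by_cases hx2 : x < 0
      · rw [Ffun_mid hx1 hx2]
        refine Or.inr (Or.inl ⟨?_, by linarith⟩)
        push_cast
        have h1 : -Real.sqrt 2 ≤ (x:ℝ) := le_of_not_gt hx1
        have h2 : -Real.sqrt 2 ≠ (x:ℝ) := fun h => neg_sqrt2_irr x h.symm
        have : -Real.sqrt 2 < (x:ℝ) := lt_of_le_of_ne h1 h2
        linarith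
      · have hx0 : 0 ≤ x := le_of_not_gt hx2
        set m : ℕ := ⌊x⌋.toNat with hm
        have hcast : ((m:ℕ):ℚ) = ((⌊x⌋:ℤ):ℚ) := by
          exact_mod_cast congrArg (fun z : ℤ => (z:ℚ))
            (Int.toNat_of_nonneg (Int.floor_nonneg.2 hx0))
        have hxeq : x = (m:ℚ) + Int.fract x := by rw [hcast]; unfold Int.fract; ring
        refine Or.inr (Or.inr ⟨m, ?_⟩)
        rw [show Ffun d x = Ffun d ((m:ℚ) + Int.fract x) by rw [← hxeq]]
        rw [Ffun_key d m (Int.fract_nonneg x) (Int.fract_lt_one x)]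
        exact Gfun_blk d m (Int.fract_nonneg x) (Int.fract_lt_one x)
  · intro q hq
    rw [mem_Sset_iff] at hq
    rcases hq with hq | ⟨hq1, hq2⟩ | ⟨n, hn⟩
    · exact ⟨q, Ffun_lo hq⟩
    · refine ⟨q - 1, ?_⟩
      have hq1' : ¬ ((q - 1 : ℚ):ℝ) < -Real.sqrt 2 := by push_cast; push_neg; linarith
      rw [Ffun_mid hq1' (by linarith), sub_add_cancel]
    · rw [mem_blk_iff] at hn
      rcases hn with (h | h) | ⟨hdn, h⟩ | ⟨h1, h2⟩
      · refine ⟨(n:ℚ), ?_⟩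
        rw [show ((n:ℚ)) = (n:ℚ) + 0 by ring, Ffun_key d n le_rfl one_pos, h]
        simp [Gfun]
      · refine ⟨(n:ℚ) + 1/4, ?_⟩
        rw [Ffun_key d n (u := 1/4) (by norm_num) (by norm_num), h]
        norm_num [Gfun]
      · refine ⟨(n:ℚ) + 1/2, ?_⟩
        rw [Ffun_key d n (u := 1/2) (by norm_num) (by norm_num), h]
        norm_num [Gfun, hdn]
      · set u : ℚ := 2*(q - 1 - n) - 3/4 with hu
        refine ⟨(n:ℚ) + u, ?_⟩
        rw [Ffun_key d n (u := u) (by rw [hu]; linarith) (by rw [hu]; linarith)]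
        have c1 : ¬ u < 1/4 := by rw [hu]; push_neg; linarith
        have c2 : ¬ u < 1/2 := by rw [hu]; push_neg; linarith
        have c3 : ¬ u < 3/4 := by rw [hu]; push_neg; linarith
        unfold Gfun
        rw [if_neg c1, if_neg c2, if_neg c3, hu]
        ring

lemma Ffun_not_regular (d : ℕ → Bool) :
    ¬ ∃ g : ℚ → ℚ, Monotone g ∧ (Ffun d) ∘ g ∘ (Ffun d) = Ffun d := by
  rintro ⟨g, hg, heq⟩
  have hpt : ∀ x, Ffun d (g (Ffun d x)) = Ffun d x := fun x => congrFun heq x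
  have s2 : (1:ℝ) - Real.sqrt 2 < 1 := by linarith [sqrt2_pos]
  -- Step 1 : g fixes rationals below -√2
  have step1 : ∀ x : ℚ, (x:ℝ) < -Real.sqrt 2 → g x = x := by
    intro x hx
    have h1 : Ffun d (g x) = x := by
      have := hpt x; rwa [Ffun_lo hx] at this
    by_cases hgx : ((g x : ℚ):ℝ) < -Real.sqrt 2
    · rwa [Ffun_lo hgx] at h1
    · exfalso
      by_cases hgx2 : g x < 0
      · rw [Ffun_mid hgx hgx2] at h1
        have : ((g x : ℚ):ℝ) + 1 = (x:ℝ) := by exact_mod_cast congrArg (fun r : ℚ => (r:ℝ)) h1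
        have hgx' : -Real.sqrt 2 ≤ ((g x : ℚ):ℝ) := le_of_not_gt hgx
        linarith
      · have h2 : (1:ℚ) ≤ Ffun d (g x) := Ffun_one_le (le_of_not_gt hgx2)
        rw [h1] at h2
        have : (1:ℝ) ≤ (x:ℝ) := by exact_mod_cast h2
        linarith [sqrt2_pos]
  -- Step 2 : g shifts rationals in (1-√2, 1) down by one
  have step2 : ∀ y : ℚ, 1 - Real.sqrt 2 < (y:ℝ) → y < 1 → g y = y - 1 := by
    intro y hy1 hy2
    have hx1 : ¬ ((y - 1 : ℚ):ℝ) < -Real.sqrt 2 := by push_cast; push_neg; linarith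
    have hx2 : (y:ℚ) - 1 < 0 := by linarith
    have h1 : Ffun d (g y) = y := by
      have := hpt (y - 1); rwa [Ffun_mid hx1 hx2, sub_add_cancel] at this
    by_cases hgy : ((g y : ℚ):ℝ) < -Real.sqrt 2
    · exfalso
      rw [Ffun_lo hgy] at h1
      rw [h1] at hgy
      linarith [sqrt2_pos]
    · by_cases hgy2 : g y < 0
      · rw [Ffun_mid hgy hgy2] at h1; linarith
      · exfalso
        have h2 : (1:ℚ) ≤ Ffun d (g y) := Ffun_one_le (le_of_not_gt hgy2)
        rw [h1] at h2; linarith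
  -- Step 3 : contradiction at a rational q in (-√2, 1-√2)
  obtain ⟨q, hq1, hq2⟩ := exists_rat_btwn (show -Real.sqrt 2 < 1 - Real.sqrt 2 by linarith)
  have hge : -Real.sqrt 2 ≤ ((g q : ℚ):ℝ) := by
    by_contra hlt
    push_neg at hlt
    obtain ⟨x, hx1, hx2⟩ := exists_rat_btwn hlt
    have : x ≤ g q := by
      rw [← step1 x hx2]
      exact hg (by exact_mod_cast le_of_lt (lt_trans hx2 hq1))
    exact absurd hx1 (not_lt.2 (by exact_mod_cast this))
  have hle : ((g q : ℚ):ℝ) ≤ -Real.sqrt 2 := by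
    by_contra hlt
    push_neg at hlt
    have hlt' : 1 - Real.sqrt 2 < ((g q : ℚ):ℝ) + 1 := by linarith
    obtain ⟨y, hy1, hy2⟩ := exists_rat_btwn (show (1:ℝ) - Real.sqrt 2 <
        min (((g q : ℚ):ℝ) + 1) 1 from lt_min hlt' s2)
    rw [lt_min_iff] at hy2
    obtain ⟨hy2a, hy2b⟩ := hy2
    have hylt1 : y < 1 := by exact_mod_cast hy2b
    have hgy : g y = y - 1 := step2 y hy1 hylt1
    have hqy : q ≤ y := by
      have : (q:ℝ) < (y:ℝ) := lt_trans hq2 hy1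
      exact le_of_lt (by exact_mod_cast this)
    have : g q ≤ y - 1 := by rw [← hgy]; exact hg hqy
    have : ((g q:ℚ):ℝ) ≤ (y:ℝ) - 1 := by exact_mod_cast this
    linarith
  exact neg_sqrt2_irr (g q) (le_antisymm hle hge)

lemma memA {d : ℕ → Bool} (n : ℕ) : 1 + (n:ℚ) ∈ Sset d :=
  blk_in_Sset (mem_blk_iff.2 (Or.inl (Or.inl rfl)))

lemma memB {d : ℕ → Bool} (n : ℕ) : 1 + (n:ℚ) + 1/4 ∈ Sset d :=
  blk_in_Sset (mem_blk_iff.2 (Or.inl (Or.inr rfl)))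

lemma memC {d : ℕ → Bool} {n : ℕ} (h : d n = true) : 1 + (n:ℚ) + 1/2 ∈ Sset d :=
  blk_in_Sset (mem_blk_iff.2 (Or.inr (Or.inl ⟨h, rfl⟩)))

lemma memP {d : ℕ → Bool} (n : ℕ) : 1 + (n:ℚ) + 3/4 ∈ Sset d :=
  blk_in_Sset (mem_blk_iff.2 (Or.inr (Or.inr ⟨le_refl _, by linarith⟩)))

lemma memIco {d : ℕ → Bool} {n : ℕ} {q : ℚ} (h1 : 1 + (n:ℚ) + 3/4 ≤ q)
    (h2 : q < 1 + (n:ℚ) + 7/8) : q ∈ Sset d :=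
  blk_in_Sset (mem_blk_iff.2 (Or.inr (Or.inr ⟨h1, h2⟩)))

lemma blk_bounds {d : ℕ → Bool} {n : ℕ} {q : ℚ} (h : q ∈ blk d n) :
    1 + (n:ℚ) ≤ q ∧ q < 1 + (n:ℚ) + 7/8 := by
  rcases mem_blk_iff.1 h with (h | h) | ⟨_, h⟩ | ⟨h1, h2⟩ <;>
    first
    | (subst h; constructor <;> linarith)
    | (constructor <;> linarith)

lemma mem_ge_one {d : ℕ → Bool} {q : ℚ} (hq : q ∈ Sset d) (h1 : (1:ℚ) ≤ q) :
    ∃ n, q ∈ blk d n := by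
  rcases mem_Sset_iff.1 hq with h | ⟨_, h⟩ | h
  · exfalso
    have : (q:ℝ) ≥ 1 := by exact_mod_cast h1
    linarith [sqrt2_pos]
  · exfalso; linarith
  · exact h

lemma blk_locate {d : ℕ → Bool} {n k : ℕ} {q : ℚ} (hq : q ∈ blk d k)
    (h1 : 1 + (n:ℚ) ≤ q) (h2 : q < 2 + (n:ℚ)) : k = n := by
  obtain ⟨b1, b2⟩ := blk_bounds hq
  by_contra hkn
  rcases Nat.lt_or_ge k n with h | h
  · have : (k:ℚ) + 1 ≤ (n:ℚ) := by exact_mod_cast h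
    linarith
  · have h' : n < k := lt_of_le_of_ne h (Ne.symm hkn)
    have : (n:ℚ) + 1 ≤ (k:ℚ) := by exact_mod_cast h'
    linarith

-- gap lemmas

lemma in_blk_n {d : ℕ → Bool} {n : ℕ} {q : ℚ} (hq : q ∈ Sset d)
    (h1 : 1 + (n:ℚ) < q) (h2 : q < 1 + (n:ℚ) + 7/8) : q ∈ blk d n := by
  have hge1 : (1:ℚ) ≤ q := by
    have : (0:ℚ) ≤ (n:ℚ) := by positivity
    linarith
  obtain ⟨k, hk⟩ := mem_ge_one hq hge1
  have := blk_locate (n := n) hk (le_of_lt h1) (by linarith)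
  rwa [this] at hk

lemma gapA {d : ℕ → Bool} (n : ℕ) {q : ℚ} (hq : q ∈ Sset d) :
    ¬ (1 + (n:ℚ) < q ∧ q < 1 + (n:ℚ) + 1/4) := by
  rintro ⟨h1, h2⟩
  have hb := in_blk_n hq h1 (by linarith)
  rcases mem_blk_iff.1 hb with (h | h) | ⟨_, h⟩ | ⟨h3, h4⟩ <;> [skip; skip; skip; skip] <;>
    first | (subst h; linarith) | linarith

lemma gapB {d : ℕ → Bool} (n : ℕ) {q : ℚ} (hq : q ∈ Sset d) :
    ¬ (1 + (n:ℚ) + 1/4 < q ∧ q < 1 + (n:ℚ) + 1/2) := by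
  rintro ⟨h1, h2⟩
  have hb := in_blk_n hq (by linarith) (by linarith)
  rcases mem_blk_iff.1 hb with (h | h) | ⟨_, h⟩ | ⟨h3, h4⟩ <;>
    first | (subst h; linarith) | linarith

lemma gapB' {d : ℕ → Bool} {n : ℕ} (hdn : d n = false) {q : ℚ} (hq : q ∈ Sset d) :
    ¬ (1 + (n:ℚ) + 1/4 < q ∧ q < 1 + (n:ℚ) + 3/4) := by
  rintro ⟨h1, h2⟩
  have hb := in_blk_n hq (by linarith) (by linarith)
  rcases mem_blk_iff.1 hb with (h | h) | ⟨hd, h⟩ | ⟨h3, h4⟩ <;>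
    first | (subst h; linarith) | linarith | (rw [hdn] at hd; exact Bool.noConfusion hd)

lemma gapC {d : ℕ → Bool} (n : ℕ) {q : ℚ} (hq : q ∈ Sset d) :
    ¬ (1 + (n:ℚ) + 1/2 < q ∧ q < 1 + (n:ℚ) + 3/4) := by
  rintro ⟨h1, h2⟩
  have hb := in_blk_n hq (by linarith) (by linarith)
  rcases mem_blk_iff.1 hb with (h | h) | ⟨_, h⟩ | ⟨h3, h4⟩ <;>
    first | (subst h; linarith) | linarith

-- density lemmas

lemma densIco {d : ℕ → Bool} (n : ℕ) {x c : ℚ} (hx1 : 1 + (n:ℚ) + 3/4 ≤ x)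
    (hx2 : x < 1 + (n:ℚ) + 7/8) (hc : x < c) :
    ∃ w ∈ Sset d, x < w ∧ w < c := by
  refine ⟨(x + min c (1 + (n:ℚ) + 7/8))/2, ?_, ?_, ?_⟩
  · refine memIco (n := n) ?_ ?_
    · have := lt_min hc hx2; linarith [min_le_right c (1 + (n:ℚ) + 7/8), lt_min hc hx2]
    · linarith [min_le_right c (1 + (n:ℚ) + 7/8), lt_min hc hx2]
  · linarith [lt_min hc hx2]
  · linarith [min_le_left c (1 + (n:ℚ) + 7/8), lt_min hc hx2]

lemma densLow1 {d : ℕ → Bool} {x c : ℚ} (hx : (x:ℝ) < -Real.sqrt 2) (hc : x < c) :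
    ∃ w ∈ Sset d, x < w ∧ w < c := by
  have hc' : (x:ℝ) < (c:ℝ) := by exact_mod_cast hc
  obtain ⟨w, hw1, hw2⟩ := exists_rat_btwn (show (x:ℝ) < min (c:ℝ) (-Real.sqrt 2) from
    lt_min hc' hx)
  rw [lt_min_iff] at hw2
  refine ⟨w, mem_Sset_iff.2 (Or.inl hw2.2), by exact_mod_cast hw1, by exact_mod_cast hw2.1⟩

lemma densLow2 {d : ℕ → Bool} {x c : ℚ} (hx1 : 1 - Real.sqrt 2 < (x:ℝ)) (hx2 : x < 1)
    (hc : x < c) : ∃ w ∈ Sset d, x < w ∧ w < c := by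
  have hc' : (x:ℝ) < (c:ℝ) := by exact_mod_cast hc
  have hx2' : (x:ℝ) < 1 := by exact_mod_cast hx2
  obtain ⟨w, hw1, hw2⟩ := exists_rat_btwn (show (x:ℝ) < min (c:ℝ) 1 from
    lt_min hc' hx2')
  rw [lt_min_iff] at hw2
  refine ⟨w, mem_Sset_iff.2 (Or.inr (Or.inl ⟨by linarith, by exact_mod_cast hw2.2⟩)),
    by exact_mod_cast hw1, by exact_mod_cast hw2.1⟩

-- covBy in the subtype

lemma covBy_subtype {S : Set ℚ} {a b : ↥S} :
    a ⋖ b ↔ a.1 < b.1 ∧ ∀ c : ℚ, c ∈ S → a.1 < c → ¬ c < b.1 := by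
  constructor
  · rintro ⟨h1, h2⟩
    refine ⟨h1, fun r hr har hrb => h2 (show _ < (⟨r, hr⟩ : ↥S) from har) hrb⟩
  · rintro ⟨h1, h2⟩
    exact ⟨h1, fun c hac hcb => h2 c.1 c.2 hac hcb⟩

lemma cov_unique {α : Type*} [LinearOrder α] {a b c : α} (h1 : a ⋖ b) (h2 : a ⋖ c) :
    b = c := by
  rcases lt_trichotomy b c with h | h | h
  · exact absurd h (h2.2 h1.1)
  · exact h
  · exact absurd h (h1.2 h2.1)

-- named points in the subtype

def ptA (d : ℕ → Bool) (n : ℕ) : ↥(Sset d) := ⟨1 + (n:ℚ), memA n⟩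

def ptB (d : ℕ → Bool) (n : ℕ) : ↥(Sset d) := ⟨1 + (n:ℚ) + 1/4, memB n⟩

def ptP (d : ℕ → Bool) (n : ℕ) : ↥(Sset d) := ⟨1 + (n:ℚ) + 3/4, memP n⟩

lemma covA (d : ℕ → Bool) (n : ℕ) : ptA d n ⋖ ptB d n := by
  rw [covBy_subtype]
  exact ⟨by simp [ptA, ptB], fun c hc h1 h2 => gapA n hc ⟨h1, h2⟩⟩

lemma covB_true {d : ℕ → Bool} {n : ℕ} (h : d n = true) :
    ptB d n ⋖ (⟨1 + (n:ℚ) + 1/2, memC h⟩ : ↥(Sset d)) := by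
  rw [covBy_subtype]
  exact ⟨by simp [ptB]; norm_num, fun c hc h1 h2 => gapB n hc ⟨h1, h2⟩⟩

lemma covC_true {d : ℕ → Bool} {n : ℕ} (h : d n = true) :
    (⟨1 + (n:ℚ) + 1/2, memC h⟩ : ↥(Sset d)) ⋖ ptP d n := by
  rw [covBy_subtype]
  exact ⟨by simp [ptP]; norm_num, fun c hc h1 h2 => gapC n hc ⟨h1, h2⟩⟩

lemma covB_false {d : ℕ → Bool} {n : ℕ} (h : d n = false) : ptB d n ⋖ ptP d n := by
  rw [covBy_subtype]
  exact ⟨by simp [ptB, ptP]; norm_num, fun c hc h1 h2 => gapB' h hc ⟨h1, h2⟩⟩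

lemma noSuccIco {d : ℕ → Bool} {n : ℕ} {x : ↥(Sset d)} (h1 : 1 + (n:ℚ) + 3/4 ≤ x.1)
    (h2 : x.1 < 1 + (n:ℚ) + 7/8) : ¬ ∃ y, x ⋖ y := by
  rintro ⟨y, hy⟩
  rw [covBy_subtype] at hy
  obtain ⟨w, hw, hw1, hw2⟩ := densIco (d := d) n h1 h2 hy.1
  exact hy.2 w hw hw1 hw2

lemma nopredA {d : ℕ → Bool} (n : ℕ) : ¬ ∃ y, y ⋖ ptA d n := by
  rintro ⟨y, hy⟩
  rw [covBy_subtype] at hy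
  obtain ⟨hy1, hy2⟩ := hy
  have hx := y.2
  rcases mem_Sset_iff.1 hx with h | ⟨ha, hb⟩ | ⟨k, hk⟩
  · obtain ⟨w, hw, hw1, hw2⟩ := densLow1 (d := d) h hy1
    exact hy2 w hw hw1 hw2
  · obtain ⟨w, hw, hw1, hw2⟩ := densLow2 (d := d) ha hb hy1
    exact hy2 w hw hw1 hw2
  · obtain ⟨b1, b2⟩ := blk_bounds hk
    have hkn : (k:ℚ) < (n:ℚ) := by
      simp only [ptA] at hy1; linarith
    have hkn' : k < n := by exact_mod_cast hkn
    have hkn2 : (k:ℚ) + 1 ≤ (n:ℚ) := by exact_mod_cast hkn'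
    rcases lt_or_ge y.1 (1 + (k:ℚ) + 3/4) with h | h
    · refine hy2 (1 + (k:ℚ) + 3/4) (memP k) h ?_
      simp only [ptA]; linarith
    · obtain ⟨w, hw, hw1, hw2⟩ := densIco (d := d) k h b2 hy1
      exact hy2 w hw hw1 hw2

def startPt {S : Set ℚ} (x : ↥S) : Prop := (∃ y, x ⋖ y) ∧ ¬ ∃ y, y ⋖ x

lemma start_iff {d : ℕ → Bool} (x : ↥(Sset d)) :
    startPt x ↔ ∃ n : ℕ, x.1 = 1 + (n:ℚ) := by
  constructor
  · rintro ⟨⟨y, hy⟩, hnp⟩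
    rcases mem_Sset_iff.1 x.2 with h | ⟨ha, hb⟩ | ⟨k, hk⟩
    · exfalso
      rw [covBy_subtype] at hy
      obtain ⟨w, hw, hw1, hw2⟩ := densLow1 (d := d) h hy.1
      exact hy.2 w hw hw1 hw2
    · exfalso
      rw [covBy_subtype] at hy
      obtain ⟨w, hw, hw1, hw2⟩ := densLow2 (d := d) ha hb hy.1
      exact hy.2 w hw hw1 hw2
    · rcases mem_blk_iff.1 hk with (h | h) | ⟨hd, h⟩ | ⟨h3, h4⟩
      · exact ⟨k, h⟩
      · exfalso
        refine hnp ⟨ptA d k, ?_⟩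
        have : x = ptB d k := Subtype.ext (by rw [h]; rfl)
        rw [this]; exact covA d k
      · exfalso
        refine hnp ⟨ptB d k, ?_⟩
        have : x = (⟨1 + (k:ℚ) + 1/2, memC hd⟩ : ↥(Sset d)) := Subtype.ext (by rw [h])
        rw [this]; exact covB_true hd
      · exact absurd ⟨y, hy⟩ (noSuccIco h3 h4)
  · rintro ⟨n, hn⟩
    have hx : x = ptA d n := Subtype.ext hn
    subst hx
    exact ⟨⟨ptB d n, covA d n⟩, nopredA n⟩

-- the three-step chain property

def chain3 {S : Set ℚ} (x : ↥S) : Prop := ∃ a b c : ↥S, x ⋖ a ∧ a ⋖ b ∧ b ⋖ c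

lemma chain3_iff {d : ℕ → Bool} (n : ℕ) : chain3 (ptA d n) ↔ d n = true := by
  constructor
  · rintro ⟨a, b, c, h1, h2, h3⟩
    by_contra hdn
    have hdn' : d n = false := by
      cases hdd : d n
      · rfl
      · rw [hdd] at hdn; exact absurd rfl hdn
    have ha : a = ptB d n := cov_unique h1 (covA d n)
    subst ha
    have hb : b = ptP d n := cov_unique h2 (covB_false hdn')
    subst hb
    exact noSuccIco (n := n) (x := ptP d n) (by simp [ptP]) (by simp [ptP]; norm_num) ⟨c, h3⟩
  · intro hdn
    exact ⟨ptB d n, ⟨1 + (n:ℚ) + 1/2, memC hdn⟩, ptP d n,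
      covA d n, covB_true hdn, covC_true hdn⟩

lemma strictMono_nat_id {ψ χ : ℕ → ℕ} (hψ : StrictMono ψ) (hχ : StrictMono χ)
    (h : ∀ n, χ (ψ n) = n) : ∀ n, ψ n = n := by
  intro n
  have h1 : n ≤ ψ n := hψ.le_apply
  have h2 : ψ n ≤ χ (ψ n) := hχ.le_apply
  rw [h n] at h2
  exact le_antisymm h2 h1

lemma Sset_iso_empty {d e : ℕ → Bool} (hde : d ≠ e) :
    IsEmpty (↥(Sset d) ≃o ↥(Sset e)) := by
  constructor
  intro φ
  apply hde
  -- φ preserves covBy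
  have hcov : ∀ a b : ↥(Sset d), a ⋖ b ↔ φ a ⋖ φ b :=
    fun a b => (apply_covBy_apply_iff φ).symm
  have hcov' : ∀ a b : ↥(Sset e), a ⋖ b ↔ φ.symm a ⋖ φ.symm b :=
    fun a b => (apply_covBy_apply_iff φ.symm).symm
  -- φ maps start points to start points
  have hstart : ∀ x : ↥(Sset d), startPt x → startPt (φ x) := by
    rintro x ⟨⟨y, hy⟩, hnp⟩
    refine ⟨⟨φ y, (hcov x y).1 hy⟩, ?_⟩
    rintro ⟨z, hz⟩
    refine hnp ⟨φ.symm z, ?_⟩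
    have := (hcov' z (φ x)).1 hz
    rwa [φ.symm_apply_apply] at this
  have hstart' : ∀ x : ↥(Sset e), startPt x → startPt (φ.symm x) := by
    rintro x ⟨⟨y, hy⟩, hnp⟩
    refine ⟨⟨φ.symm y, (hcov' x y).1 hy⟩, ?_⟩
    rintro ⟨z, hz⟩
    refine hnp ⟨φ z, ?_⟩
    have := (hcov z (φ.symm x)).1 hz
    rwa [φ.apply_symm_apply] at this
  -- index maps
  have hψ0 : ∀ n : ℕ, ∃ m : ℕ, (φ (ptA d n)).1 = 1 + (m:ℚ) := by
    intro n
    exact (start_iff _).1 (hstart _ ((start_iff (ptA d n)).2 ⟨n, rfl⟩))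
  have hχ0 : ∀ n : ℕ, ∃ m : ℕ, (φ.symm (ptA e n)).1 = 1 + (m:ℚ) := by
    intro n
    exact (start_iff _).1 (hstart' _ ((start_iff (ptA e n)).2 ⟨n, rfl⟩))
  choose ψ hψ using hψ0
  choose χ hχ using hχ0
  have hφA : ∀ n, φ (ptA d n) = ptA e (ψ n) := fun n => Subtype.ext (hψ n)
  have hφA' : ∀ n, φ.symm (ptA e n) = ptA d (χ n) := fun n => Subtype.ext (hχ n)
  have hψmono : StrictMono ψ := by
    intro m n hmn
    have h1 : ptA d m < ptA d n := by
      simp only [ptA, Subtype.mk_lt_mk]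
      have : (m:ℚ) < (n:ℚ) := by exact_mod_cast hmn
      linarith
    have h2 : φ (ptA d m) < φ (ptA d n) := φ.strictMono h1
    rw [hφA, hφA] at h2
    simp only [ptA, Subtype.mk_lt_mk] at h2
    have : (ψ m : ℚ) < (ψ n : ℚ) := by linarith
    exact_mod_cast this
  have hχmono : StrictMono χ := by
    intro m n hmn
    have h1 : ptA e m < ptA e n := by
      simp only [ptA, Subtype.mk_lt_mk]
      have : (m:ℚ) < (n:ℚ) := by exact_mod_cast hmn
      linarith
    have h2 : φ.symm (ptA e m) < φ.symm (ptA e n) := φ.symm.strictMono h1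
    rw [hφA', hφA'] at h2
    simp only [ptA, Subtype.mk_lt_mk] at h2
    have : (χ m : ℚ) < (χ n : ℚ) := by linarith
    exact_mod_cast this
  have hcomp : ∀ n, χ (ψ n) = n := by
    intro n
    have : φ.symm (φ (ptA d n)) = ptA d n := φ.symm_apply_apply _
    rw [hφA, hφA'] at this
    have := congrArg (fun z : ↥(Sset d) => z.1) this
    simp only [ptA] at this
    have h2 : ((χ (ψ n)):ℚ) = (n:ℚ) := by linarith
    exact_mod_cast h2
  have hψid : ∀ n, ψ n = n := strictMono_nat_id hψmono hχmono hcomp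
  -- transfer the chain property
  funext n
  have hchain : chain3 (ptA d n) ↔ chain3 (ptA e n) := by
    constructor
    · rintro ⟨a, b, c, h1, h2, h3⟩
      refine ⟨φ a, φ b, φ c, ?_, (hcov _ _).1 h2, (hcov _ _).1 h3⟩
      have := (hcov _ _).1 h1
      rwa [hφA, hψid] at this
    · rintro ⟨a, b, c, h1, h2, h3⟩
      refine ⟨φ.symm a, φ.symm b, φ.symm c, ?_, (hcov' _ _).1 h2, (hcov' _ _).1 h3⟩
      have := (hcov' _ _).1 h1
      have he : φ.symm (ptA e n) = ptA d n := by
        rw [← hψid n, ← hφA, φ.symm_apply_apply, hψid]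
      rwa [he] at this
  have hd := (chain3_iff (d := d) n)
  have he := (chain3_iff (d := e) n)
  cases hdd : d n
  · cases hee : e n
    · rfl
    · exfalso
      have := hd.1 (hchain.2 (he.2 hee))
      rw [hdd] at this; exact Bool.noConfusion this
  · cases hee : e n
    · exfalso
      have := he.1 (hchain.1 (hd.2 hdd))
      rw [hee] at this; exact Bool.noConfusion this
    · rfl

lemma DRel_iso {f g : ℚ → ℚ} (h : DRel f g) :
    Nonempty (↥(Set.range f) ≃o ↥(Set.range g)) := by
  obtain ⟨h, _, ⟨u1, v1, _, _, he1, he2⟩, ⟨u2, v2, hu2, hv2, he3, he4⟩⟩ := h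
  have hrange : Set.range f = Set.range h := by
    apply Set.Subset.antisymm
    · rintro q ⟨z, rfl⟩; exact ⟨v1 z, by rw [he2]; rfl⟩
    · rintro q ⟨z, rfl⟩; exact ⟨u1 z, by rw [he1]; rfl⟩
  have e1 : ↥(Set.range f) ≃o ↥(Set.range h) := OrderIso.setCongr _ _ hrange
  refine ⟨e1.trans ?_⟩
  have toMem : ∀ x : ↥(Set.range h), u2 x.1 ∈ Set.range g := by
    rintro ⟨_, z, rfl⟩; exact ⟨z, by rw [he3]; rfl⟩
  have invMem : ∀ y : ↥(Set.range g), v2 y.1 ∈ Set.range h := by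
    rintro ⟨_, z, rfl⟩; exact ⟨z, by rw [he4]; rfl⟩
  have linv : ∀ x : ↥(Set.range h), v2 (u2 x.1) = x.1 := by
    rintro ⟨_, z, rfl⟩
    have : u2 (h z) = g z := by rw [he3]; rfl
    rw [this, show v2 (g z) = h z by rw [he4]; rfl]
  have rinv : ∀ y : ↥(Set.range g), u2 (v2 y.1) = y.1 := by
    rintro ⟨_, z, rfl⟩
    have : v2 (g z) = h z := by rw [he4]; rfl
    rw [this, show u2 (h z) = g z by rw [he3]; rfl]
  refine ⟨⟨fun x => ⟨u2 x.1, toMem x⟩, fun y => ⟨v2 y.1, invMem y⟩,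
     fun x => Subtype.ext (linv x), fun y => Subtype.ext (rinv y)⟩, ?_⟩
  intro a b
  show (⟨u2 a.1, _⟩ : ↥(Set.range g)) ≤ ⟨u2 b.1, _⟩ ↔ a ≤ b
  constructor
  · intro hab
    have : v2 (u2 a.1) ≤ v2 (u2 b.1) := hv2 hab
    rw [linv a, linv b] at this
    exact this
  · intro hab; exact hu2 hab

lemma digits_inj : Function.Injective _root_.digits := by
  have key : ∀ s t : ℝ, s < t → _root_.digits s ≠ _root_.digits t := by
    intro s t h hst
    obtain ⟨q, hq1, hq2⟩ := exists_rat_btwn h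
    have h1 := congrFun hst ((Denumerable.eqv ℚ) q)
    simp only [_root_.digits, Equiv.symm_apply_apply] at h1
    rw [if_neg (not_lt.2 (le_of_lt hq1)), if_pos hq2] at h1
    exact Bool.noConfusion h1
  intro s t hst
  by_contra hne
  rcases lt_or_gt_of_ne hne with h | h
  · exact key s t h hst
  · exact key t s h hst.symm

end Aux

/-- there is a real-indexed family of non-regular
order-preserving maps `ℚ → ℚ` with pairwise non-order-isomorphic images; in
particular its members are pairwise non-𝒟-related, giving continuum many
non-regular 𝒟-classes in `End(ℚ,≤)`. -/
theorem stmt_14 :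
    ∃ f : ℝ → (ℚ → ℚ),
      (∀ t : ℝ, Monotone (f t)) ∧
      (∀ t : ℝ, ¬ (∃ g : ℚ → ℚ, Monotone g ∧ (f t) ∘ g ∘ (f t) = f t)) ∧
      (∀ s t : ℝ, s ≠ t →
        IsEmpty (↥(Set.range (f s)) ≃o ↥(Set.range (f t))) ∧
        ¬ DRel (f s) (f t)) := by
  refine ⟨fun t => Ffun (digits t), fun t => Ffun_mono _, fun t => Ffun_not_regular _,
    fun s t hst => ?_⟩
  have hd : digits s ≠ digits t := fun h => hst (digits_inj h)
  have hiso : IsEmpty (↥(Set.range (Ffun (digits s))) ≃o ↥(Set.range (Ffun (digits t)))) := by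
    rw [range_Ffun, range_Ffun]; exact Sset_iso_empty hd
  refine ⟨hiso, fun hD => ?_⟩
  exact hiso.false (DRel_iso hD).some
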